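/- arXiv:1705.06543 — 6 statements merged into one kernel-verified Lean document; each statement's English description precedes it below -/
import Mathlib

section
/- Let $\mu$ and $\lambda$ be partitions with at most $N$ parts such that $\lambda$ does not contain $\mu$ (i.e. $\lambda_k<\mu_k$ for some $k$). Then the $N\times N$ matrix with entries $A(i,j)=\prod_{r=-\mu_i+i}^{N-1}(q^{-\lambda_j+j-1}-q^r)$ has determinant zero. -/
open Finset

/-- Entry `A(i,j)` (0-based indices): the product of the `μ i + N - 1 - i` factors
`(q^{j - λ j} - q^r)` for `r` ranging from `i + 1 - μ i` to `N - 1`,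
where `q^{j - λ j}` is the `j`-th coordinate of `X_N(λ)`. -/
noncomputable def entryA (q : ℝ) (N : ℕ) (μ lam : Fin N → ℕ) (i j : Fin N) : ℝ :=
  ∏ t ∈ Finset.range (μ i + (N - 1 - (i : ℕ))),
    (q ^ ((j : ℤ) - lam j) - q ^ ((i : ℤ) + 1 - μ i + t))

theorem det_entryA_eq_zero (q : ℝ) (hq0 : 0 < q) (hq1 : q < 1) (N : ℕ)
    (μ lam : Fin N → ℕ) (hμ : Antitone μ) (hlam : Antitone lam)
    (h : ∃ k, lam k < μ k) :
    Matrix.det (fun i j : Fin N => entryA q N μ lam i j) = 0 := by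
  obtain ⟨k, hk⟩ := h
  have key : ∀ i j : Fin N, i ≤ k → k ≤ j → entryA q N μ lam i j = 0 := by
    intro i j hik hkj
    have hlj : lam j ≤ lam k := hlam hkj
    have hmi : μ k ≤ μ i := hμ hik
    have hij : (i : ℕ) ≤ (j : ℕ) := le_trans hik hkj
    have hikn : (i : ℕ) ≤ (k : ℕ) := hik
    have hkjn : (k : ℕ) ≤ (j : ℕ) := hkj
    have hiN : (i : ℕ) < N := i.2
    have hjN : (j : ℕ) < N := j.2
    have h1 : lam j + (i : ℕ) + 1 ≤ (j : ℕ) + μ i := by omega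
    apply Finset.prod_eq_zero (i := (j : ℕ) + μ i - (lam j + i + 1))
    · simp only [Finset.mem_range]; omega
    · have heq : (i : ℤ) + 1 - μ i + ((j : ℕ) + μ i - (lam j + i + 1) : ℕ)
          = (j : ℤ) - lam j := by
        have : (((j : ℕ) + μ i - (lam j + i + 1) : ℕ) : ℤ)
            = (j : ℤ) + μ i - (lam j + i + 1) := by
          push_cast [h1]; ring
        rw [this]; ring
      rw [heq, sub_self]
  change Matrix.det (Matrix.of fun i j : Fin N => entryA q N μ lam i j) = 0
  rw [Matrix.det_apply]
  apply Finset.sum_eq_zero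
  intro σ _
  have hexists : ∃ j : Fin N, k ≤ j ∧ σ j ≤ k := by
    by_contra hc
    push_neg at hc
    have hmap : ∀ j ∈ Finset.Ici k, σ j ∈ Finset.Ioi k := by
      intro j hj
      simp only [Finset.mem_Ici] at hj
      simpa using hc j hj
    have hcard := Finset.card_le_card_of_injOn σ hmap
      σ.injective.injOn
    rw [Fin.card_Ici, Fin.card_Ioi] at hcard
    have := k.2
    omega
  obtain ⟨j, h1, h2⟩ := hexists
  have : (∏ i, entryA q N μ lam (σ i) i) = 0 :=
    Finset.prod_eq_zero (Finset.mem_univ j) (key (σ j) j h2 h1)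
  simp [this]
end

section
/- For a partition $\mu$ with at most $N$ parts, $\frac{\prod_{i=1}^N \prod_{r=-\mu_i+i}^{N-1}(q^{-\mu_i+i-1}-q^r)}{\prod_{1\le i<j\le N}(q^{-\mu_i+i-1}-q^{-\mu_j+j-1})} = q^{-\sum_{i=1}^N \mu_i(\mu_i-i+1)} \prod_{(i,j)\in\mu}(1-q^{h(i,j)})$, where $h(i,j)$ is the hook length of the box $(i,j)$ in the Young diagram of $\mu$. -/
open Finset

/-- Product of `(1 - q^{h(i,j)})` over all boxes `(i,j)` of the Young diagram of `μ`
(0-based boxes), with hook length `h(i,j) = μ i - j + μ'_j - i - 1` written with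
`μ'_j = #{i' : j < μ i'}` (0-based convention). -/
noncomputable def hookProd (q : ℝ) (N : ℕ) (μ : Fin N → ℕ) : ℝ :=
  ∏ i : Fin N, ∏ j ∈ Finset.range (μ i),
    (1 - q ^ ((μ i : ℤ) + ((Finset.univ.filter fun i' : Fin N => j < μ i').card : ℤ)
        - (i : ℤ) - (j : ℤ) - 1))



@[to_additive]
lemma prod_pairs {M : Type*} [CommMonoid M] {N : ℕ} (f : Fin N → Fin N → M) :
    ∏ p ∈ Finset.univ.filter (fun p : Fin N × Fin N => p.1 < p.2), f p.1 p.2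
      = ∏ i : Fin N, ∏ j ∈ Ioi i, f i j := by
  rw [Finset.prod_sigma']
  refine Finset.prod_nbij' (fun p => ⟨p.1, p.2⟩) (fun p => (p.1, p.2)) ?_ ?_ ?_ ?_ ?_ <;>
    simp [Finset.mem_sigma]

lemma zpow_sum' {α : Type*} (q : ℝ) (hq : q ≠ 0) (s : Finset α) (f : α → ℤ) :
    ∏ i ∈ s, q ^ f i = q ^ (∑ i ∈ s, f i) := by
  classical
  induction s using Finset.cons_induction with
  | empty => simp
  | cons a s ha ih => rw [Finset.prod_cons, Finset.sum_cons, zpow_add₀ hq, ih]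



variable {N : ℕ} (μ : Fin N → ℕ)

/-- `L i = μ i + (N - 1 - i)`, the shifted first-column hook lengths. -/
def Lf (i : Fin N) : ℕ := μ i + (N - 1 - (i : ℕ))

/-- `F i j = j + #{i' > i : μ i' ≤ j}`, the complement map for row `i`. -/
def Ff (i : Fin N) (j : ℕ) : ℕ :=
  j + (Finset.univ.filter fun i' : Fin N => i < i' ∧ μ i' ≤ j).card

section Row
variable (hμ : Antitone μ)
include hμ

lemma Lf_lt {i j : Fin N} (hij : i < j) : Lf μ j < Lf μ i := by
  have h1 : μ j ≤ μ i := hμ (le_of_lt hij)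
  have hj : (j : ℕ) < N := j.isLt
  have hij' : (i : ℕ) < (j : ℕ) := hij
  simp only [Lf]; omega

omit hμ in
lemma Ff_lt_Lf {i : Fin N} {j : ℕ} (hj : j < μ i) : Ff μ i j < Lf μ i := by
  have h : (Finset.univ.filter fun i' : Fin N => i < i' ∧ μ i' ≤ j).card ≤ (Ioi i).card :=
    Finset.card_le_card (by intro x hx; simp only [Finset.mem_filter] at hx
                            exact Finset.mem_Ioi.2 hx.2.1)
  rw [Fin.card_Ioi] at h
  simp only [Ff, Lf]; omega

omit hμ in
lemma Ff_strictMono (i : Fin N) : StrictMono (Ff μ i) := by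
  intro j j' hjj
  have h : (Finset.univ.filter fun i' : Fin N => i < i' ∧ μ i' ≤ j).card ≤
      (Finset.univ.filter fun i' : Fin N => i < i' ∧ μ i' ≤ j').card := by
    apply Finset.card_le_card
    apply Finset.monotone_filter_right
    intro x _ hx
    exact ⟨hx.1, hx.2.trans hjj.le⟩
  simp only [Ff]; omega

lemma Ff_ne_Lf {i j' : Fin N} (hij' : i < j') {j : ℕ} (hj : j < μ i) :
    Ff μ i j ≠ Lf μ j' := by
  have hj'N : (j' : ℕ) < N := j'.isLt
  rcases le_or_gt (μ j') j with h | h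
  · -- F i j > L j'
    have hsub : Finset.Ici j' ⊆
        Finset.univ.filter fun i' : Fin N => i < i' ∧ μ i' ≤ j := by
      intro x hx
      rw [Finset.mem_Ici] at hx
      refine Finset.mem_filter.2 ⟨Finset.mem_univ _, lt_of_lt_of_le hij' hx, ?_⟩
      exact le_trans (hμ hx) h
    have hcard := Finset.card_le_card hsub
    rw [Fin.card_Ici] at hcard
    simp only [Ff, Lf]; omega
  · -- F i j < L j'
    have hsub : (Finset.univ.filter fun i' : Fin N => i < i' ∧ μ i' ≤ j) ⊆ Finset.Ioi j' := by
      intro x hx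
      simp only [Finset.mem_filter] at hx
      rw [Finset.mem_Ioi]
      by_contra hc
      push_neg at hc
      exact absurd (le_trans (hμ hc) hx.2.2) (not_le.2 h)
    have hcard := Finset.card_le_card hsub
    rw [Fin.card_Ioi] at hcard
    simp only [Ff, Lf]; omega

lemma row_union (i : Fin N) :
    ((Finset.range (μ i)).image (Ff μ i)) ∪ ((Ioi i).image (Lf μ)) =
      Finset.range (Lf μ i) := by
  have hdisj : Disjoint ((Finset.range (μ i)).image (Ff μ i)) ((Ioi i).image (Lf μ)) := by
    rw [Finset.disjoint_left]
    intro m hm hm'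
    obtain ⟨j, hj, rfl⟩ := Finset.mem_image.1 hm
    obtain ⟨j', hj', he⟩ := Finset.mem_image.1 hm'
    exact Ff_ne_Lf μ hμ (Finset.mem_Ioi.1 hj') (Finset.mem_range.1 hj) he.symm
  apply Finset.eq_of_subset_of_card_le
  · intro m hm
    rw [Finset.mem_union] at hm
    rw [Finset.mem_range]
    rcases hm with hm | hm
    · obtain ⟨j, hj, rfl⟩ := Finset.mem_image.1 hm
      exact Ff_lt_Lf μ (Finset.mem_range.1 hj)
    · obtain ⟨j', hj', rfl⟩ := Finset.mem_image.1 hm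
      exact Lf_lt μ hμ (Finset.mem_Ioi.1 hj')
  · rw [Finset.card_union_of_disjoint hdisj, Finset.card_range,
      Finset.card_image_of_injOn (fun a _ b _ h => (Ff_strictMono μ i).injective h),
      Finset.card_image_of_injOn (fun a ha b hb h => ?_), Finset.card_range, Fin.card_Ioi]
    · simp only [Lf]; omega
    · by_contra hab
      rcases lt_or_gt_of_ne hab with hl | hl
      · exact absurd h (Lf_lt μ hμ hl).ne'
      · exact absurd h (Lf_lt μ hμ hl).ne

lemma row_prod (q : ℝ) (i : Fin N) :
    (∏ j ∈ Finset.range (μ i), (1 - q ^ (Lf μ i - Ff μ i j))) *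
      (∏ j' ∈ Ioi i, (1 - q ^ (Lf μ i - Lf μ j'))) =
      ∏ t ∈ Finset.range (Lf μ i), (1 - q ^ (t + 1)) := by
  rw [← Finset.prod_image (f := fun m => 1 - q ^ (Lf μ i - m))
        (fun a _ b _ h => (Ff_strictMono μ i).injective h),
      ← Finset.prod_image (f := fun m => 1 - q ^ (Lf μ i - m))
        (g := Lf μ) (fun a ha b hb h => ?_),
      ← Finset.prod_union ?_, row_union μ hμ i]
  · rw [← Finset.prod_range_reflect (fun t => 1 - q ^ (t + 1)) (Lf μ i)]
    apply Finset.prod_congr rfl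
    intro m hm
    rw [Finset.mem_range] at hm
    congr 2
    omega
  · rw [Finset.disjoint_left]
    intro m hm hm'
    obtain ⟨j, hj, rfl⟩ := Finset.mem_image.1 hm
    obtain ⟨j', hj', he⟩ := Finset.mem_image.1 hm'
    exact Ff_ne_Lf μ hμ (Finset.mem_Ioi.1 hj') (Finset.mem_range.1 hj) he.symm
  · by_contra hab
    rcases lt_or_gt_of_ne hab with hl | hl
    · exact absurd h (Lf_lt μ hμ hl).ne'
    · exact absurd h (Lf_lt μ hμ hl).ne



end Row

lemma hook_card_split (hμ : Antitone μ) (i : Fin N) {j : ℕ} (hj : j < μ i) :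
    (Finset.univ.filter fun i' : Fin N => j < μ i').card =
      ((i : ℕ) + 1) + (Finset.univ.filter fun i' : Fin N => i < i' ∧ j < μ i').card := by
  have h1 : (Finset.univ.filter fun i' : Fin N => j < μ i') =
      Finset.Iic i ∪ (Finset.univ.filter fun i' : Fin N => i < i' ∧ j < μ i') := by
    ext x
    simp only [Finset.mem_filter, Finset.mem_union, Finset.mem_Iic, Finset.mem_univ,
      true_and]
    constructor
    · intro hx
      rcases le_or_gt x i with h | h
      · exact Or.inl h
      · exact Or.inr ⟨h, hx⟩
    · rintro (h | h)
      · exact lt_of_lt_of_le hj (hμ h)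
      · exact h.2
  have h2 : Disjoint (Finset.Iic i)
      (Finset.univ.filter fun i' : Fin N => i < i' ∧ j < μ i') := by
    rw [Finset.disjoint_left]
    intro x hx hx'
    exact absurd (Finset.mem_filter.1 hx').2.1 (not_lt.2 (Finset.mem_Iic.1 hx))
  rw [h1, Finset.card_union_of_disjoint h2, Fin.card_Iic]

lemma hook_card_compl (i : Fin N) {j : ℕ} :
    (Finset.univ.filter fun i' : Fin N => i < i' ∧ μ i' ≤ j).card +
      (Finset.univ.filter fun i' : Fin N => i < i' ∧ j < μ i').card = N - 1 - (i : ℕ) := by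
  rw [← Fin.card_Ioi i, ← Finset.card_union_of_disjoint ?_]
  · congr 1
    ext x
    simp only [Finset.mem_union, Finset.mem_filter, Finset.mem_univ, true_and,
      Finset.mem_Ioi]
    constructor
    · rintro (h | h) <;> exact h.1
    · intro h
      rcases le_or_gt (μ x) j with h' | h'
      · exact Or.inl ⟨h, h'⟩
      · exact Or.inr ⟨h, h'⟩
  · rw [Finset.disjoint_left]
    intro x hx hx'
    exact absurd (Finset.mem_filter.1 hx').2.2 (not_lt.2 (Finset.mem_filter.1 hx).2.2)

lemma hookProd_eq (q : ℝ) (hμ : Antitone μ) :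
    hookProd q N μ = ∏ i : Fin N, ∏ j ∈ Finset.range (μ i),
      (1 - q ^ (Lf μ i - Ff μ i j)) := by
  unfold hookProd
  apply Finset.prod_congr rfl
  intro i _
  apply Finset.prod_congr rfl
  intro j hj
  rw [Finset.mem_range] at hj
  have hFL : Ff μ i j < Lf μ i := by
    have h : (Finset.univ.filter fun i' : Fin N => i < i' ∧ μ i' ≤ j).card ≤ (Ioi i).card :=
      Finset.card_le_card (by intro x hx; simp only [Finset.mem_filter] at hx
                              exact Finset.mem_Ioi.2 hx.2.1)
    rw [Fin.card_Ioi] at h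
    simp only [Ff, Lf]; omega
  congr 1
  rw [← zpow_natCast q (Lf μ i - Ff μ i j)]
  congr 1
  have h1 := hook_card_split μ hμ i hj
  have h2 := hook_card_compl μ i (j := j)
  have hiN : (i : ℕ) < N := i.isLt
  simp only [Lf, Ff] at *
  omega



lemma num_eq (q : ℝ) (hq : q ≠ 0) :
    (∏ i : Fin N, ∏ t ∈ Finset.range (μ i + (N - 1 - (i : ℕ))),
        (q ^ ((i : ℤ) - μ i) - q ^ ((i : ℤ) + 1 - μ i + t)))
    = q ^ (∑ i : Fin N, ((i : ℤ) - μ i) * (Lf μ i : ℤ)) *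
        ∏ i : Fin N, ∏ t ∈ Finset.range (Lf μ i), (1 - q ^ (t + 1)) := by
  rw [← zpow_sum' q hq, ← Finset.prod_mul_distrib]
  apply Finset.prod_congr rfl
  intro i _
  have hstep : ∀ t : ℕ, q ^ ((i : ℤ) - μ i) - q ^ ((i : ℤ) + 1 - μ i + t)
      = q ^ ((i : ℤ) - μ i) * (1 - q ^ (t + 1)) := by
    intro t
    have he : (i : ℤ) + 1 - μ i + t = ((i : ℤ) - μ i) + ((t + 1 : ℕ) : ℤ) := by
      push_cast; ring
    rw [he, zpow_add₀ hq, zpow_natCast]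
    ring
  calc ∏ t ∈ Finset.range (μ i + (N - 1 - (i : ℕ))),
        (q ^ ((i : ℤ) - μ i) - q ^ ((i : ℤ) + 1 - μ i + t))
      = ∏ t ∈ Finset.range (Lf μ i), (q ^ ((i : ℤ) - μ i) * (1 - q ^ (t + 1))) :=
        Finset.prod_congr rfl fun t _ => hstep t
    _ = (q ^ ((i : ℤ) - μ i)) ^ (Lf μ i) * ∏ t ∈ Finset.range (Lf μ i), (1 - q ^ (t + 1)) := by
        rw [Finset.prod_mul_distrib, Finset.prod_const, Finset.card_range]
    _ = q ^ (((i : ℤ) - μ i) * (Lf μ i : ℤ)) * ∏ t ∈ Finset.range (Lf μ i), (1 - q ^ (t + 1)) := by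
        rw [← zpow_natCast (q ^ ((i : ℤ) - μ i)) (Lf μ i), ← zpow_mul]

lemma den_eq (q : ℝ) (hq : q ≠ 0) (hμ : Antitone μ) :
    (∏ p ∈ Finset.univ.filter (fun p : Fin N × Fin N => p.1 < p.2),
        (q ^ ((p.1 : ℤ) - μ p.1) - q ^ ((p.2 : ℤ) - μ p.2)))
    = q ^ (∑ i : Fin N, ((i : ℤ) - μ i) * ((N - 1 - (i : ℕ) : ℕ) : ℤ)) *
        ∏ i : Fin N, ∏ j ∈ Ioi i, (1 - q ^ (Lf μ i - Lf μ j)) := by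
  rw [prod_pairs (fun i j => q ^ ((i : ℤ) - μ i) - q ^ ((j : ℤ) - μ j)),
    ← zpow_sum' q hq, ← Finset.prod_mul_distrib]
  apply Finset.prod_congr rfl
  intro i _
  have hstep : ∀ j ∈ Ioi i, q ^ ((i : ℤ) - μ i) - q ^ ((j : ℤ) - μ j)
      = q ^ ((i : ℤ) - μ i) * (1 - q ^ (Lf μ i - Lf μ j)) := by
    intro j hj
    have hij0 : i < j := Finset.mem_Ioi.1 hj
    have hij : (i : ℕ) < (j : ℕ) := hij0
    have hm : μ j ≤ μ i := hμ (le_of_lt hij0)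
    have hjN : (j : ℕ) < N := j.isLt
    have hcast : ((Lf μ i - Lf μ j : ℕ) : ℤ) = ((j : ℤ) - μ j) - ((i : ℤ) - μ i) := by
      simp only [Lf]; omega
    have he : (j : ℤ) - μ j = ((i : ℤ) - μ i) + ((Lf μ i - Lf μ j : ℕ) : ℤ) := by omega
    rw [he, zpow_add₀ hq, zpow_natCast]
    ring
  rw [Finset.prod_congr rfl hstep, Finset.prod_mul_distrib, Finset.prod_const, Fin.card_Ioi,
    ← zpow_natCast (q ^ ((i : ℤ) - μ i)) (N - 1 - (i : ℕ)), ← zpow_mul]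


theorem interpolation_diagonal_value (q : ℝ) (hq0 : 0 < q) (hq1 : q < 1) (N : ℕ)
    (μ : Fin N → ℕ) (hμ : Antitone μ) :
    (∏ i : Fin N, ∏ t ∈ Finset.range (μ i + (N - 1 - (i : ℕ))),
        (q ^ ((i : ℤ) - μ i) - q ^ ((i : ℤ) + 1 - μ i + t))) /
      (∏ p ∈ Finset.univ.filter (fun p : Fin N × Fin N => p.1 < p.2),
        (q ^ ((p.1 : ℤ) - μ p.1) - q ^ ((p.2 : ℤ) - μ p.2)))
    = q ^ (-(∑ i : Fin N, (μ i : ℤ) * ((μ i : ℤ) - (i : ℤ)))) * hookProd q N μ := by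
  have hq : q ≠ 0 := hq0.ne'
  have hden_pos : (0:ℝ) < ∏ p ∈ Finset.univ.filter (fun p : Fin N × Fin N => p.1 < p.2),
      (q ^ ((p.1 : ℤ) - μ p.1) - q ^ ((p.2 : ℤ) - μ p.2)) := by
    rw [den_eq μ q hq hμ]
    apply mul_pos (zpow_pos hq0 _)
    apply Finset.prod_pos
    intro i _
    apply Finset.prod_pos
    intro j hj
    have h := Lf_lt μ hμ (Finset.mem_Ioi.1 hj)
    have h2 : q ^ (Lf μ i - Lf μ j) < 1 := pow_lt_one₀ hq0.le hq1 (by omega)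
    linarith
  rw [div_eq_iff (ne_of_gt hden_pos), num_eq μ q hq, den_eq μ q hq hμ, hookProd_eq μ q hμ]
  have hsum : (∑ i : Fin N, ((i:ℤ) - μ i) * (Lf μ i : ℤ))
      = (-(∑ i : Fin N, (μ i : ℤ) * ((μ i : ℤ) - (i : ℤ)))) +
        ∑ i : Fin N, ((i:ℤ) - μ i) * ((N - 1 - (i:ℕ) : ℕ) : ℤ) := by
    rw [← Finset.sum_neg_distrib, ← Finset.sum_add_distrib]
    apply Finset.sum_congr rfl
    intro i _
    have hL : (Lf μ i : ℤ) = (μ i : ℤ) + ((N - 1 - (i:ℕ) : ℕ) : ℤ) := by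
      simp only [Lf]; push_cast; ring
    rw [hL]; ring
  have hP : (∏ i : Fin N, ∏ t ∈ Finset.range (Lf μ i), (1 - q ^ (t+1)))
      = (∏ i : Fin N, ∏ j ∈ Finset.range (μ i), (1 - q ^ (Lf μ i - Ff μ i j))) *
        (∏ i : Fin N, ∏ j ∈ Ioi i, (1 - q ^ (Lf μ i - Lf μ j))) := by
    rw [← Finset.prod_mul_distrib]
    exact Finset.prod_congr rfl fun i _ => (row_prod μ hμ q i).symm
  rw [hsum, zpow_add₀ hq, hP]
  ring
end

section
/- Let $0<q<1$, let $\mu, \lambda$ be partitions with at most $N$ parts, and define $I_{\mu|N}$ as above. If $\lambda$ does not contain $\mu$, then $I_{\mu|N}(X_N(\lambda);q)=0$, where $X_N(\lambda) = (q^{-\lambda_1}, q^{-\lambda_2+1}, \dots, q^{-\lambda_N+N-1})$. -/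
open Finset

/-- Vandermonde product `∏_{i<j} (x i - x j)`. -/
noncomputable def vdm (N : ℕ) (x : Fin N → ℝ) : ℝ :=
  ∏ p ∈ Finset.univ.filter (fun p : Fin N × Fin N => p.1 < p.2), (x p.1 - x p.2)

/-- Numerator determinant of the interpolation polynomial `I_{μ|N}`. -/
noncomputable def interpNum (q : ℝ) (N : ℕ) (μ : Fin N → ℕ) (x : Fin N → ℝ) : ℝ :=
  Matrix.det (fun i j : Fin N =>
    ∏ t ∈ Finset.range (μ i + (N - 1 - (i : ℕ))), (x j - q ^ ((i : ℤ) + 1 - μ i + t)))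

/-- The node `X_N(λ) = (q^{-λ_1}, q^{-λ_2+1}, …, q^{-λ_N+N-1})` (0-based: `q^{j - λ j}`). -/
noncomputable def nodeX (q : ℝ) (N : ℕ) (lam : Fin N → ℕ) : Fin N → ℝ :=
  fun j => q ^ ((j : ℤ) - lam j)

theorem interpolation_vanishing (q : ℝ) (hq0 : 0 < q) (hq1 : q < 1) (N : ℕ)
    (μ lam : Fin N → ℕ) (hμ : Antitone μ) (hlam : Antitone lam)
    (h : ∃ k, lam k < μ k) :
    interpNum q N μ (nodeX q N lam) / vdm N (nodeX q N lam) = 0 := by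
  obtain ⟨k, hk⟩ := h
  suffices hnum : interpNum q N μ (nodeX q N lam) = 0 by rw [hnum, zero_div]
  unfold interpNum nodeX
  erw [Matrix.det_apply]
  apply Finset.sum_eq_zero
  intro σ _
  have hex : ∃ j : Fin N, k ≤ j ∧ σ j ≤ k := by
    by_contra hc
    push_neg at hc
    have hsub : (Finset.univ.filter (fun j : Fin N => k ≤ j)).image σ ⊆
        Finset.univ.filter (fun i : Fin N => k < i) := by
      intro i hi
      simp only [Finset.mem_image, Finset.mem_filter] at hi ⊢
      obtain ⟨j, ⟨_, hj⟩, rfl⟩ := hi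
      exact ⟨Finset.mem_univ _, hc j hj⟩
    have h1 := Finset.card_le_card hsub
    rw [Finset.card_image_of_injective _ σ.injective] at h1
    have e1 : (Finset.univ.filter (fun j : Fin N => k ≤ j)) = Finset.Ici k := by
      ext j; simp [Finset.mem_Ici]
    have e2 : (Finset.univ.filter (fun i : Fin N => k < i)) = Finset.Ioi k := by
      ext j; simp [Finset.mem_Ioi]
    rw [e1, e2, Fin.card_Ici, Fin.card_Ioi] at h1
    have := k.isLt
    omega
  obtain ⟨j, hkj, hjk⟩ := hex
  have hμlam : (lam j : ℤ) < μ (σ j) := by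
    have h1 : lam j ≤ lam k := hlam hkj
    have h2 : μ k ≤ μ (σ j) := hμ hjk
    exact_mod_cast lt_of_le_of_lt h1 (lt_of_lt_of_le hk h2)
  have hij : ((σ j : ℕ) : ℤ) ≤ ((j : ℕ) : ℤ) := by
    exact_mod_cast le_trans hjk hkj
  have hjN : (j : ℕ) < N := j.isLt
  have hiN : ((σ j) : ℕ) < N := (σ j).isLt
  have hz : (∏ t ∈ Finset.range (μ (σ j) + (N - 1 - ((σ j) : ℕ))),
      (q ^ ((j : ℤ) - lam j) - q ^ (((σ j) : ℤ) + 1 - μ (σ j) + t))) = 0 := by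
    have hmem : ((j : ℤ) - lam j - (((σ j) : ℤ) + 1 - μ (σ j))).toNat ∈
        Finset.range (μ (σ j) + (N - 1 - ((σ j) : ℕ))) := by
      rw [Finset.mem_range]; omega
    apply Finset.prod_eq_zero hmem
    have hexp : ((σ j) : ℤ) + 1 - μ (σ j) +
        (((j : ℤ) - lam j - (((σ j) : ℤ) + 1 - μ (σ j))).toNat : ℤ) =
        (j : ℤ) - lam j := by omega
    rw [hexp, sub_self]
  rw [Finset.prod_eq_zero (Finset.mem_univ j) hz, smul_zero]
end

section
/- Let $0<q<1$ and let $\mu$ be a partition with at most $N$ parts. Then $I_{\mu|N}(X_N(\mu);q) = q^{-\sum_{i} \mu_i(\mu_i-i+1)} \prod_{(i,j)\in\mu}(1-q^{h(i,j)})$, where $X_N(\mu)=(q^{-\mu_1},q^{-\mu_2+1},\dots,q^{-\mu_N+N-1})$ and $h(i,j)$ is the hook length of box $(i,j)$ of $\mu$. -/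
open Finset

/-! ### Auxiliary lemmas -/

lemma aux_zpow_sum {ι : Type*} (q : ℝ) (hq : q ≠ 0) (s : Finset ι) (f : ι → ℤ) :
    q ^ (∑ i ∈ s, f i) = ∏ i ∈ s, q ^ f i := by
  classical
  induction s using Finset.induction_on with
  | empty => simp
  | insert _ _ h ih =>
    rw [Finset.sum_insert h, Finset.prod_insert h, zpow_add₀ hq, ih]

lemma aux_prod_Ioc (f : ℤ → ℝ) (a : ℤ) (n : ℕ) :
    ∏ t ∈ Finset.range n, f (a + 1 + t) = ∏ k ∈ Finset.Ioc a (a + n), f k := by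
  induction n with
  | zero => simp
  | succ n ih =>
    rw [Finset.prod_range_succ, ih]
    have h1 : (a + (n + 1) : ℤ) = (a + n) + 1 := by ring
    have h2 : Finset.Ioc a (a + ((n : ℤ) + 1)) = insert (a + n + 1) (Finset.Ioc a (a + n)) := by
      ext k
      simp only [Finset.mem_Ioc, Finset.mem_insert]
      omega
    rw [show ((n : ℤ) + 1 : ℤ) = ((n+1 : ℕ) : ℤ) by push_cast; ring] at h2
    rw [h2, Finset.prod_insert (by simp), mul_comm]
    congr 2
    ring

lemma aux_pairs {N : ℕ} (F : Fin N → Fin N → ℝ) :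
    ∏ p ∈ Finset.univ.filter (fun p : Fin N × Fin N => p.1 < p.2), F p.1 p.2
      = ∏ i : Fin N, ∏ j ∈ Finset.Ioi i, F i j := by
  rw [Finset.prod_sigma']
  refine Finset.prod_nbij' (fun p : Fin N × Fin N => (⟨p.1, p.2⟩ : (_ : Fin N) × Fin N))
    (fun x => (x.1, x.2)) ?_ ?_ ?_ ?_ ?_ <;>
    simp +contextual [Finset.mem_sigma, Finset.mem_Ioi, Finset.mem_filter]

theorem interpolation_value_at_mu (q : ℝ) (hq0 : 0 < q) (hq1 : q < 1) (N : ℕ)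
    (μ : Fin N → ℕ) (hμ : Antitone μ) :
    interpNum q N μ (nodeX q N μ) / vdm N (nodeX q N μ)
      = q ^ (-(∑ i : Fin N, (μ i : ℤ) * ((μ i : ℤ) - (i : ℤ)))) * hookProd q N μ := by
  classical
  have hqne : q ≠ 0 := ne_of_gt hq0
  have hanti : StrictAnti (fun k : ℤ => q ^ k) := zpow_right_strictAnti₀ hq0 hq1
  set a : Fin N → ℤ := fun i => (i : ℤ) - μ i with ha
  set c : ℕ → ℕ := fun j => (Finset.univ.filter fun i' : Fin N => j < μ i').card with hc
  -- strict monotonicity of a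
  have haMono : ∀ i j : Fin N, i < j → a i < a j := by
    intro i j hij
    have h1 : μ j ≤ μ i := hμ (le_of_lt hij)
    have h2 : (i : ℤ) < (j : ℤ) := by exact_mod_cast hij
    simp only [ha]
    omega
  have haInj : ∀ i j : Fin N, a i = a j → i = j := by
    intro i j h
    rcases lt_trichotomy i j with h' | h' | h'
    · exact absurd h (ne_of_lt (haMono i j h'))
    · exact h'
    · exact absurd h.symm (ne_of_lt (haMono j i h'))
  -- bounds on c
  have hcN : ∀ j, c j ≤ N := by
    intro j
    simpa using Finset.card_filter_le Finset.univ (fun i' : Fin N => j < μ i')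
  have hcLow : ∀ (i : Fin N) (j : ℕ), j < μ i → (i : ℕ) + 1 ≤ c j := by
    intro i j hj
    have hsub : Finset.Iic i ⊆ Finset.univ.filter (fun i' : Fin N => j < μ i') := by
      intro i' hi'
      simp only [Finset.mem_Iic] at hi'
      simp only [Finset.mem_filter, Finset.mem_univ, true_and]
      exact lt_of_lt_of_le hj (hμ hi')
    have := Finset.card_le_card hsub
    rwa [Fin.card_Iic] at this
  have hcAnti : ∀ j j' : ℕ, j ≤ j' → c j' ≤ c j := by
    intro j j' h
    apply Finset.card_le_card
    intro i' hi'
    simp only [Finset.mem_filter, Finset.mem_univ, true_and] at hi' ⊢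
    omega
  -- the node values
  have hx : ∀ j : Fin N, nodeX q N μ j = q ^ (a j) := fun j => rfl
  -- matrix entries as products over Ioc
  set M : Matrix (Fin N) (Fin N) ℝ := fun i j =>
    ∏ t ∈ Finset.range (μ i + (N - 1 - (i : ℕ))), (nodeX q N μ j - q ^ ((i : ℤ) + 1 - μ i + t))
    with hM
  have hMIoc : ∀ i j : Fin N, M i j = ∏ k ∈ Finset.Ioc (a i) ((N : ℤ) - 1),
      (q ^ (a j) - q ^ k) := by
    intro i j
    have hle : (i : ℕ) ≤ N - 1 := by omega
    have hcast : (a i) + (μ i + (N - 1 - (i : ℕ)) : ℕ) = (N : ℤ) - 1 := by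
      have : ((μ i + (N - 1 - (i : ℕ)) : ℕ) : ℤ) = (μ i : ℤ) + ((N : ℤ) - 1 - (i : ℤ)) := by
        have hiN : (i : ℕ) < N := i.isLt
        push_cast
        omega
      simp only [ha, this]
      ring
    rw [hM]
    simp only
    rw [← hcast, ← aux_prod_Ioc (fun k => q ^ (a j) - q ^ k) (a i) (μ i + (N - 1 - (i : ℕ)))]
    apply Finset.prod_congr rfl
    intro t _
    rw [hx]
    congr 2
    simp only [ha]
    ring
  -- triangularity
  have htri : M.BlockTriangular OrderDual.toDual := by
    intro i j hij
    have hij' : i < j := hij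
    rw [hMIoc]
    apply Finset.prod_eq_zero (i := a j)
    · rw [Finset.mem_Ioc]
      constructor
      · exact haMono i j hij'
      · simp only [ha]
        have : (j : ℤ) ≤ (N : ℤ) - 1 := by
          have := j.isLt; omega
        omega
    · ring
  have hdet : interpNum q N μ (nodeX q N μ) = ∏ i : Fin N, M i i := by
    rw [interpNum]
    exact Matrix.det_of_lowerTriangular M htri
  -- the set decomposition
  have hdecomp : ∀ i : Fin N,
      Finset.Ioc (a i) ((N : ℤ) - 1)
        = ((Finset.Ioi i).image a) ∪ ((Finset.range (μ i)).image
            (fun j => (c j : ℤ) - 1 - j)) := by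
    intro i
    have hSsub : (Finset.Ioi i).image a ⊆ Finset.Ioc (a i) ((N : ℤ) - 1) := by
      intro k hk
      rw [Finset.mem_image] at hk
      obtain ⟨j, hj, rfl⟩ := hk
      rw [Finset.mem_Ioi] at hj
      rw [Finset.mem_Ioc]
      refine ⟨haMono i j hj, ?_⟩
      simp only [ha]
      have := j.isLt; omega
    have hHsub : (Finset.range (μ i)).image (fun j => (c j : ℤ) - 1 - j)
        ⊆ Finset.Ioc (a i) ((N : ℤ) - 1) := by
      intro k hk
      rw [Finset.mem_image] at hk
      obtain ⟨j, hj, rfl⟩ := hk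
      rw [Finset.mem_range] at hj
      rw [Finset.mem_Ioc]
      have h1 := hcLow i j hj
      have h2 := hcN j
      constructor
      · simp only [ha]
        have : (j : ℤ) < μ i := by exact_mod_cast hj
        omega
      · omega
    have hdisj : Disjoint ((Finset.Ioi i).image a)
        ((Finset.range (μ i)).image (fun j => (c j : ℤ) - 1 - j)) := by
      rw [Finset.disjoint_left]
      intro k hk hk'
      rw [Finset.mem_image] at hk hk'
      obtain ⟨j', _, rfl⟩ := hk
      obtain ⟨j, hj, heq⟩ := hk'
      -- a j' = c j - 1 - j  is impossible
      by_cases hcase : j < μ j'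
      · have h1 : (j' : ℕ) + 1 ≤ c j := hcLow j' j hcase
        have : (j : ℤ) < μ j' := by exact_mod_cast hcase
        simp only [ha] at heq
        omega
      · push_neg at hcase
        have h2 : c j ≤ (j' : ℕ) := by
          have hsub : Finset.univ.filter (fun i' : Fin N => j < μ i') ⊆ Finset.Iio j' := by
            intro i' hi'
            simp only [Finset.mem_filter, Finset.mem_univ, true_and] at hi'
            rw [Finset.mem_Iio]
            by_contra hge
            push_neg at hge
            have := hμ hge
            omega
          have := Finset.card_le_card hsub
          rwa [Fin.card_Iio] at this
        simp only [ha] at heq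
        have : (μ j' : ℤ) ≤ (j : ℤ) := by exact_mod_cast hcase
        omega
    have hcardS : ((Finset.Ioi i).image a).card = N - 1 - (i : ℕ) := by
      rw [Finset.card_image_of_injOn (fun x _ y _ h => haInj x y h), Fin.card_Ioi]
    have hcardH : ((Finset.range (μ i)).image (fun j => (c j : ℤ) - 1 - j)).card = μ i := by
      rw [Finset.card_image_of_injOn, Finset.card_range]
      intro x hx' y hy' h
      simp only at h
      rcases lt_trichotomy x y with h' | h' | h'
      · have := hcAnti x y (le_of_lt h'); omega
      · exact h'
      · have := hcAnti y x (le_of_lt h'); omega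
    have hcardIoc : (Finset.Ioc (a i) ((N : ℤ) - 1)).card = N - 1 - (i : ℕ) + μ i := by
      rw [Int.card_Ioc]
      simp only [ha]
      have := i.isLt
      omega
    symm
    apply Finset.eq_of_subset_of_card_le
    · exact Finset.union_subset hSsub hHsub
    · rw [Finset.card_union_of_disjoint hdisj, hcardS, hcardH, hcardIoc]
  -- split the diagonal product
  have hdiag : ∀ i : Fin N, M i i
      = (∏ j ∈ Finset.Ioi i, (q ^ (a i) - q ^ (a j)))
        * ∏ j ∈ Finset.range (μ i), (q ^ (a i) - q ^ ((c j : ℤ) - 1 - j)) := by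
    intro i
    rw [hMIoc, hdecomp i]
    have hdisj : Disjoint ((Finset.Ioi i).image a)
        ((Finset.range (μ i)).image (fun j => (c j : ℤ) - 1 - j)) := by
      have := hdecomp i
      rw [Finset.disjoint_left]
      intro k hk hk'
      -- reuse proof: derive from cards? easier: redo
      rw [Finset.mem_image] at hk hk'
      obtain ⟨j', _, rfl⟩ := hk
      obtain ⟨j, hj, heq⟩ := hk'
      by_cases hcase : j < μ j'
      · have h1 : (j' : ℕ) + 1 ≤ c j := hcLow j' j hcase
        have : (j : ℤ) < μ j' := by exact_mod_cast hcase
        simp only [ha] at heq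
        omega
      · push_neg at hcase
        have h2 : c j ≤ (j' : ℕ) := by
          have hsub : Finset.univ.filter (fun i' : Fin N => j < μ i') ⊆ Finset.Iio j' := by
            intro i' hi'
            simp only [Finset.mem_filter, Finset.mem_univ, true_and] at hi'
            rw [Finset.mem_Iio]
            by_contra hge
            push_neg at hge
            have := hμ hge
            omega
          have := Finset.card_le_card hsub
          rwa [Fin.card_Iio] at this
        simp only [ha] at heq
        have : (μ j' : ℤ) ≤ (j : ℤ) := by exact_mod_cast hcase
        omega
    rw [Finset.prod_union hdisj]
    congr 1
    · rw [Finset.prod_image (fun x _ y _ h => haInj x y h)]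
    · rw [Finset.prod_image]
      intro x hx' y hy' h
      simp only at h
      rw [Finset.mem_coe, Finset.mem_range] at hx' hy'
      rcases lt_trichotomy x y with h' | h' | h'
      · have := hcAnti x y (le_of_lt h'); omega
      · exact h'
      · have := hcAnti y x (le_of_lt h'); omega
  -- the Vandermonde
  have hvdm : vdm N (nodeX q N μ) = ∏ i : Fin N, ∏ j ∈ Finset.Ioi i,
      (q ^ (a i) - q ^ (a j)) := by
    rw [vdm]
    exact aux_pairs fun i j => nodeX q N μ i - nodeX q N μ j
  have hvdmne : vdm N (nodeX q N μ) ≠ 0 := by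
    rw [hvdm]
    apply Finset.prod_ne_zero_iff.mpr
    intro i _
    apply Finset.prod_ne_zero_iff.mpr
    intro j hj
    rw [Finset.mem_Ioi] at hj
    have : a i < a j := haMono i j hj
    have := hanti this
    simp only at this
    intro h
    -- q^(a i) - q^(a j) = 0 contradicts strict inequality
    nlinarith
  -- put it together
  rw [hdet]
  have hsplit : ∏ i : Fin N, M i i
      = vdm N (nodeX q N μ) * ∏ i : Fin N,
          ∏ j ∈ Finset.range (μ i), (q ^ (a i) - q ^ ((c j : ℤ) - 1 - j)) := by
    rw [hvdm, ← Finset.prod_mul_distrib]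
    exact Finset.prod_congr rfl (fun i _ => hdiag i)
  rw [hsplit, mul_comm (vdm N (nodeX q N μ)), mul_div_assoc,
    div_self hvdmne, mul_one]
  -- now the hook product identity
  have hfactor : ∀ (i : Fin N), ∀ j ∈ Finset.range (μ i),
      q ^ (a i) - q ^ ((c j : ℤ) - 1 - j)
        = q ^ (a i) * (1 - q ^ ((μ i : ℤ) + (c j : ℤ) - (i : ℤ) - (j : ℤ) - 1)) := by
    intro i j _
    rw [mul_sub, mul_one]
    congr 1
    rw [← zpow_add₀ hqne]
    congr 1
    simp only [ha]
    ring
  calc ∏ i : Fin N, ∏ j ∈ Finset.range (μ i), (q ^ (a i) - q ^ ((c j : ℤ) - 1 - j))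
      = ∏ i : Fin N, ((q ^ (a i)) ^ (μ i) * ∏ j ∈ Finset.range (μ i),
          (1 - q ^ ((μ i : ℤ) + (c j : ℤ) - (i : ℤ) - (j : ℤ) - 1))) := by
        apply Finset.prod_congr rfl
        intro i _
        rw [Finset.prod_congr rfl (hfactor i), Finset.prod_mul_distrib,
          Finset.prod_const, Finset.card_range]
    _ = q ^ (-(∑ i : Fin N, (μ i : ℤ) * ((μ i : ℤ) - (i : ℤ)))) * hookProd q N μ := by
        rw [Finset.prod_mul_distrib, hookProd]
        congr 1
        have hexp : -(∑ i : Fin N, (μ i : ℤ) * ((μ i : ℤ) - (i : ℤ)))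
            = ∑ i : Fin N, a i * μ i := by
          rw [← Finset.sum_neg_distrib]
          apply Finset.sum_congr rfl
          intro i _
          simp only [ha]
          ring
        rw [hexp, aux_zpow_sum q hqne]
        apply Finset.prod_congr rfl
        intro i _
        rw [← zpow_natCast (q ^ (a i)) (μ i), ← zpow_mul]
end

section
/- Let $0<q<1$ and let $\mu$ be a partition with at most $N$ parts. Then the expansion of $I_{\mu|N}(\cdot;q)$ on Schur polynomials is $I_{\mu|N} = \sum_{\nu\subseteq\mu} \frac{(q^N;q)_\mu}{(q^N;q)_\nu}\,\sigma(\mu,\nu;q)\, s_{\nu}$, where $\sigma(\mu,\nu;q) = (-1)^{|\mu|-|\nu|} q^{n(\mu)-n(\mu')-n(\nu)+n(\nu')} \det\left[\frac{1}{(q;q)_{\mu_i-\nu_k-i+k}}\right]_{i,k=1}^{\ell(\mu)}$. -/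
open Finset
open scoped Classical

/-- `(q;q)_n = ∏_{i=1}^n (1-q^i)` -/
noncomputable def qPoch (q : ℝ) (n : ℕ) : ℝ := ∏ i ∈ Finset.range n, (1 - q ^ (i + 1))

/-- `1/(q;q)_r` with the convention that it vanishes for negative integers `r`. -/
noncomputable def invQPoch (q : ℝ) (r : ℤ) : ℝ := if r < 0 then 0 else 1 / qPoch q r.toNat

/-- `(z;q)_λ = ∏_{(i,j)∈λ} (1 - z q^{j-i})` (0-based boxes; contents agree with 1-based). -/
noncomputable def pochPartition (q z : ℝ) (N : ℕ) (lam : Fin N → ℕ) : ℝ :=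
  ∏ i : Fin N, ∏ j ∈ Finset.range (lam i), (1 - z * q ^ ((j : ℤ) - (i : ℤ)))

/-- `n(λ) = ∑ (i-1) λ_i` (0-based: `∑ i * λ i`). -/
def nStat (N : ℕ) (lam : Fin N → ℕ) : ℕ := ∑ i : Fin N, (i : ℕ) * lam i

/-- `n(λ') = ∑ (j-1) λ'_j` for the conjugate partition `λ'`. -/
def nStatConj (N : ℕ) (lam : Fin N → ℕ) : ℕ :=
  ∑ j ∈ Finset.range (Finset.univ.sup lam),
    j * (Finset.univ.filter fun i : Fin N => j < lam i).card

/-- The coefficient `σ(μ,ν;q)` of the Schur expansion of `I_{μ|N}`. -/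
noncomputable def sigmaCoeff (q : ℝ) (N : ℕ) (μ ν : Fin N → ℕ) : ℝ :=
  (-1) ^ ((∑ i, μ i) - (∑ i, ν i)) *
  q ^ ((nStat N μ : ℤ) - nStatConj N μ - nStat N ν + nStatConj N ν) *
  Matrix.det (fun i k : Fin N => invQPoch q ((μ i : ℤ) - ν k - (i : ℤ) + (k : ℤ)))

namespace ISE

lemma qPoch_succ (q : ℝ) (n : ℕ) : qPoch q (n+1) = qPoch q n * (1 - q^(n+1)) :=
  Finset.prod_range_succ _ _

lemma qPoch_pos {q : ℝ} (hq0 : 0 < q) (hq1 : q < 1) (n : ℕ) : 0 < qPoch q n := by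
  refine Finset.prod_pos fun i _ => ?_
  have : q ^ (i+1) < 1 := pow_lt_one₀ hq0.le hq1 (Nat.succ_ne_zero i)
  linarith

lemma qPoch_ne {q : ℝ} (hq0 : 0 < q) (hq1 : q < 1) (n : ℕ) : qPoch q n ≠ 0 :=
  (qPoch_pos hq0 hq1 n).ne'

lemma qPoch_zero (q : ℝ) : qPoch q 0 = 1 := by simp [qPoch]

lemma qPoch_add (q : ℝ) (a b : ℕ) :
    qPoch q (a + b) = qPoch q a * ∏ j ∈ range b, (1 - q ^ (a + j + 1)) := by
  rw [qPoch, Finset.prod_range_add]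
  rfl

/-- Gaussian binomial coefficient as a real number. -/
noncomputable def gauss (q : ℝ) (m k : ℕ) : ℝ :=
  if k ≤ m then qPoch q m / (qPoch q k * qPoch q (m - k)) else 0

lemma gauss_zero {q : ℝ} (hq0 : 0 < q) (hq1 : q < 1) (m : ℕ) : gauss q m 0 = 1 := by
  rw [gauss, if_pos (Nat.zero_le m), qPoch_zero, Nat.sub_zero, one_mul,
    div_self (qPoch_ne hq0 hq1 m)]

lemma gauss_self {q : ℝ} (hq0 : 0 < q) (hq1 : q < 1) (m : ℕ) : gauss q m m = 1 := by
  rw [gauss, if_pos le_rfl, Nat.sub_self, qPoch_zero, mul_one,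
    div_self (qPoch_ne hq0 hq1 m)]

lemma gauss_of_gt (q : ℝ) {m k : ℕ} (h : m < k) : gauss q m k = 0 := by
  simp [gauss, Nat.not_le.mpr h]

lemma gauss_pascal {q : ℝ} (hq0 : 0 < q) (hq1 : q < 1) (m k : ℕ) :
    gauss q (m+1) (k+1) = gauss q m k + q^(k+1) * gauss q m (k+1) := by
  rcases lt_trichotomy k m with h | rfl | h
  · -- k < m, so k+1 ≤ m
    obtain ⟨d, rfl⟩ : ∃ d, m = k + 1 + d := ⟨m - (k+1), by omega⟩
    have h1 : gauss q (k+1+d+1) (k+1)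
        = qPoch q (k+1+d+1) / (qPoch q (k+1) * qPoch q (d+1)) := by
      rw [gauss, if_pos (by omega), show k+1+d+1 - (k+1) = d+1 by omega]
    have h2 : gauss q (k+1+d) k = qPoch q (k+1+d) / (qPoch q k * qPoch q (d+1)) := by
      rw [gauss, if_pos (by omega), show k+1+d - k = d+1 by omega]
    have h3 : gauss q (k+1+d) (k+1) = qPoch q (k+1+d) / (qPoch q (k+1) * qPoch q d) := by
      rw [gauss, if_pos (by omega), show k+1+d - (k+1) = d by omega]
    rw [h1, h2, h3]
    have e1 : qPoch q (k+1+d+1) = qPoch q (k+1+d) * (1 - q^(k+1+d+1)) := qPoch_succ q _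
    have e2 : qPoch q (k+1) = qPoch q k * (1 - q^(k+1)) := qPoch_succ q _
    have e3 : qPoch q (d+1) = qPoch q d * (1 - q^(d+1)) := qPoch_succ q _
    have n1 := qPoch_ne hq0 hq1 (k+1+d)
    have n2 := qPoch_ne hq0 hq1 k
    have n3 := qPoch_ne hq0 hq1 d
    have n4 := qPoch_ne hq0 hq1 (k+1)
    have n5 := qPoch_ne hq0 hq1 (d+1)
    rw [e1, e2, e3]
    have n2' : (1 : ℝ) - q^(k+1) ≠ 0 := by
      intro hcon; apply n4; rw [e2, hcon, mul_zero]
    have n3' : (1 : ℝ) - q^(d+1) ≠ 0 := by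
      intro hcon; apply n5; rw [e3, hcon, mul_zero]
    field_simp
    rw [show k+1+d+1 = (k+1) + (d+1) by ring, pow_add]
    ring
  · -- k = m
    rw [gauss_self hq0 hq1, gauss_self hq0 hq1, gauss_of_gt q (by omega), mul_zero, add_zero]
  · -- m < k
    rw [gauss_of_gt q (by omega), gauss_of_gt q (by omega), gauss_of_gt q (by omega)]
    ring


/-- `C2 d = d(d-1)/2` over the integers. -/
def C2 (d : ℤ) : ℤ := d * (d - 1) / 2

lemma two_mul_C2 (d : ℤ) : 2 * C2 d = d * (d - 1) := by
  have h : (2 : ℤ) ∣ d * (d - 1) := by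
    have := Int.even_mul_succ_self (d - 1)
    rw [show d - 1 + 1 = d by ring] at this
    rcases this with ⟨k, hk⟩
    exact ⟨k, by linarith [hk]⟩
  rw [C2, Int.mul_ediv_cancel' h]

lemma C2_sub_one (d : ℤ) : C2 d = C2 (d - 1) + (d - 1) := by
  have h1 := two_mul_C2 d
  have h2 := two_mul_C2 (d - 1)
  have h3 : d * (d - 1) = (d - 1) * (d - 1 - 1) + 2 * (d - 1) := by ring
  omega

lemma C2_add_one (d : ℤ) : C2 (d + 1) = C2 d + d := by
  have := C2_sub_one (d + 1)
  simpa using this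

lemma neg_one_zpow_succ (a : ℤ) : (-1 : ℝ) ^ (a + 1) = -(-1 : ℝ) ^ a := by
  rw [zpow_add₀ (by norm_num : (-1 : ℝ) ≠ 0), zpow_one]
  ring

/-- Coefficient of `x^k` in `∏_{t<m} (x - q^{e+t})`. -/
noncomputable def cf (q : ℝ) (m : ℕ) (e : ℤ) (k : ℕ) : ℝ :=
  (-1 : ℝ) ^ ((m : ℤ) - k) * q ^ (e * ((m : ℤ) - k) + C2 ((m : ℤ) - k)) * gauss q m k

lemma cf_of_gt (q : ℝ) {m k : ℕ} (e : ℤ) (h : m < k) : cf q m e k = 0 := by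
  rw [cf, gauss_of_gt q h, mul_zero]

lemma cf_self {q : ℝ} (hq0 : 0 < q) (hq1 : q < 1) (m : ℕ) (e : ℤ) : cf q m e m = 1 := by
  rw [cf, gauss_self hq0 hq1, sub_self]
  norm_num [C2]

lemma cf_succ_zero {q : ℝ} (hq0 : 0 < q) (hq1 : q < 1) (m : ℕ) (e : ℤ) :
    cf q (m+1) e 0 = -(q ^ (e + m) * cf q m e 0) := by
  have hq : q ≠ 0 := hq0.ne'
  rw [cf, cf, gauss_zero hq0 hq1, gauss_zero hq0 hq1]
  push_cast
  have a1 : ((m : ℤ) + 1 - 0) = ((m : ℤ) - 0) + 1 := by ring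
  rw [a1, neg_one_zpow_succ]
  have a2 : e * (((m:ℤ) - 0) + 1) + C2 (((m:ℤ) - 0) + 1)
      = (e + m) + (e * ((m:ℤ) - 0) + C2 ((m:ℤ) - 0)) := by
    linear_combination C2_add_one ((m:ℤ) - 0)
  rw [a2, zpow_add₀ hq]
  ring

lemma cf_succ {q : ℝ} (hq0 : 0 < q) (hq1 : q < 1) (m : ℕ) (e : ℤ) (k : ℕ) :
    cf q (m+1) e (k+1) = cf q m e k - q ^ (e + m) * cf q m e (k+1) := by
  have hq : q ≠ 0 := hq0.ne'
  rcases Nat.lt_or_ge m (k+1) with h | h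
  · rcases Nat.lt_or_ge m k with h2 | h2
    · rw [cf_of_gt q e (by omega), cf_of_gt q e (by omega), cf_of_gt q e h]
      ring
    · have hk : k = m := by omega
      subst hk
      rw [cf_of_gt q e h, mul_zero, sub_zero, cf_self hq0 hq1, cf_self hq0 hq1]
  · -- k + 1 ≤ m
    rw [cf, gauss_pascal hq0 hq1 m k]
    have hc : ((m : ℤ) + 1 - (k + 1)) = (m : ℤ) - k := by ring
    push_cast
    rw [hc]
    simp only [cf]
    push_cast
    have key : (-1:ℝ)^((m:ℤ)-k) * q^(e*((m:ℤ)-k)+C2 ((m:ℤ)-k)) * q^(k+1)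
        = -(q^(e+(m:ℤ)) * ((-1:ℝ)^((m:ℤ)-((k:ℤ)+1))
            * q^(e*((m:ℤ)-((k:ℤ)+1))+C2 ((m:ℤ)-((k:ℤ)+1))))) := by
      have a1 : ((m:ℤ) - ((k:ℤ) + 1)) = ((m:ℤ) - k - 1) := by ring
      have a0 : ((m:ℤ) - (k:ℤ)) = ((m:ℤ) - k - 1) + 1 := by ring
      rw [a1, a0, neg_one_zpow_succ, ← zpow_natCast q (k+1)]
      rw [mul_assoc, ← zpow_add₀ hq]
      have a2 : e * (((m:ℤ) - k - 1) + 1) + C2 (((m:ℤ) - k - 1) + 1) + ((k+1 : ℕ) : ℤ)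
          = (e + m) + (e * ((m:ℤ) - k - 1) + C2 ((m:ℤ) - k - 1)) := by
        push_cast
        linear_combination C2_add_one ((m:ℤ) - k - 1)
      rw [a2, zpow_add₀ hq]
      ring
    linear_combination gauss q m (k+1) * key

lemma expand {q : ℝ} (hq0 : 0 < q) (hq1 : q < 1) (m : ℕ) (e : ℤ) (x : ℝ) :
    ∏ t ∈ range m, (x - q ^ (e + t)) = ∑ k ∈ range (m+1), cf q m e k * x ^ k := by
  have hq : q ≠ 0 := hq0.ne'
  induction m with
  | zero => simp [cf_self hq0 hq1 0 e]
  | succ m ih =>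
    rw [Finset.prod_range_succ, ih]
    have expand_mul : (∑ k ∈ range (m+1), cf q m e k * x ^ k) * (x - q ^ (e + (m:ℤ)))
        = (∑ k ∈ range (m+1), cf q m e k * x ^ (k+1))
          - q ^ (e + (m:ℤ)) * ∑ k ∈ range (m+1), cf q m e k * x ^ k := by
      rw [mul_sub, Finset.sum_mul, Finset.mul_sum]
      refine congrArg₂ (· - ·) ?_ ?_
      · exact Finset.sum_congr rfl fun k _ => by ring
      · rw [Finset.sum_mul]
        exact Finset.sum_congr rfl fun k _ => by ring
    push_cast
    rw [expand_mul]
    have step : ∑ k ∈ range (m+2), cf q (m+1) e k * x ^ k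
        = (∑ k ∈ range (m+1), cf q m e k * x ^ (k+1))
          - q ^ (e + (m:ℤ)) * ∑ k ∈ range (m+1), cf q m e k * x ^ k := by
      rw [Finset.sum_range_succ' (fun k => cf q (m+1) e k * x ^ k) (m+1)]
      have h1 : ∀ k, cf q (m+1) e (k+1) * x ^ (k+1)
          = cf q m e k * x ^ (k+1) - q ^ (e + (m:ℤ)) * (cf q m e (k+1) * x ^ (k+1)) := by
        intro k
        rw [cf_succ hq0 hq1 m e k]
        ring
      rw [Finset.sum_congr rfl fun k _ => h1 k, Finset.sum_sub_distrib]
      rw [cf_succ_zero hq0 hq1 m e]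
      have h2 : ∑ k ∈ range (m+1), q ^ (e + (m:ℤ)) * (cf q m e (k+1) * x ^ (k+1))
          = q ^ (e + (m:ℤ)) * ∑ k ∈ range (m+1), cf q m e (k+1) * x ^ (k+1) := by
        rw [Finset.mul_sum]
      have h3 : (∑ k ∈ range (m+1), cf q m e (k+1) * x ^ (k+1)) + cf q m e 0 * x ^ 0
          = ∑ k ∈ range (m+2), cf q m e k * x ^ k := by
        rw [Finset.sum_range_succ' (fun k => cf q m e k * x ^ k) (m+1)]
      have h4 : ∑ k ∈ range (m+2), cf q m e k * x ^ k
          = ∑ k ∈ range (m+1), cf q m e k * x ^ k := by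
        rw [Finset.sum_range_succ, cf_of_gt q e (by omega)]
        ring
      rw [h2]
      have h5 : ∑ k ∈ range (m+1), cf q m e (k+1) * x ^ (k+1)
          = (∑ k ∈ range (m+1), cf q m e k * x ^ k) - cf q m e 0 * x ^ 0 := by
        rw [← h4, ← h3]; ring
      rw [h5]
      ring
    rw [← step]

lemma zpow_sum₀ {x : ℝ} (hx : x ≠ 0) {α : Type*} (s : Finset α) (f : α → ℤ) :
    x ^ (∑ i ∈ s, f i) = ∏ i ∈ s, x ^ f i := by
  classical
  induction s using Finset.induction with
  | empty => simp
  | insert _ _ h ih =>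
    rw [Finset.sum_insert h, Finset.prod_insert h, zpow_add₀ hx, ih]

/-- Key entry factorization. -/
lemma entry_eq {q : ℝ} (hq0 : 0 < q) (hq1 : q < 1) (Mi Li : ℕ) (a b : ℤ)
    (hM : (Mi : ℤ) - Li = a - b) :
    cf q Mi (1 - a) Li
      = ((-1:ℝ)^a * q^(-C2 a) * qPoch q Mi)
        * ((((-1:ℝ)^(-b) * q^(C2 b)) * (qPoch q Li)⁻¹) * invQPoch q (a - b)) := by
  have hq : q ≠ 0 := hq0.ne'
  have hn1 : (-1 : ℝ) ≠ 0 := by norm_num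
  rcases lt_or_ge (a - b) 0 with hd | hd
  · rw [invQPoch, if_pos hd, cf, gauss_of_gt q (by omega : Mi < Li)]
    ring
  · rw [invQPoch, if_neg (not_lt.mpr hd), cf, gauss, if_pos (by omega : Li ≤ Mi)]
    have h1 : ((Mi : ℤ) - Li) = a - b := hM
    have h2 : (Mi - Li : ℕ) = (a - b).toNat := by omega
    rw [h1, h2]
    have hsgn : (-1:ℝ) ^ (a - b) = (-1:ℝ)^a * (-1:ℝ)^(-b) := by
      rw [show a - b = a + -b by ring, zpow_add₀ hn1]
    have hexp : (1 - a) * (a - b) + C2 (a - b) = (-C2 a) + C2 b := by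
      have t1 := two_mul_C2 (a - b)
      have t2 := two_mul_C2 a
      have t3 := two_mul_C2 b
      have hr : 2*((1-a)*(a-b)) + (a-b)*((a-b)-1) = b*(b-1) - a*(a-1) := by ring
      linarith
    rw [hsgn, hexp, zpow_add₀ hq]
    have n1 := qPoch_ne hq0 hq1 Li
    have n2 := qPoch_ne hq0 hq1 (a-b).toNat
    field_simp

/-- `nStatConj` equals the sum of binomials of the parts. -/
lemma nStatConj_eq (N : ℕ) (lam : Fin N → ℕ) :
    (nStatConj N lam : ℤ) = ∑ i : Fin N, C2 ((lam i : ℕ) : ℤ) := by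
  have step1 : nStatConj N lam = ∑ i : Fin N, ∑ j ∈ range (lam i), j := by
    rw [nStatConj]
    have h1 : ∀ j, j * (Finset.univ.filter fun i : Fin N => j < lam i).card
        = ∑ i ∈ (Finset.univ.filter fun i : Fin N => j < lam i), j := by
      intro j; rw [Finset.sum_const, smul_eq_mul, mul_comm]
    rw [Finset.sum_congr rfl fun j _ => h1 j]
    have h2 : ∀ j, ∑ i ∈ (Finset.univ.filter fun i : Fin N => j < lam i), j
        = ∑ i : Fin N, if j < lam i then j else 0 := by
      intro j; rw [Finset.sum_filter]
    rw [Finset.sum_congr rfl fun j _ => h2 j, Finset.sum_comm]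
    refine Finset.sum_congr rfl fun i _ => ?_
    rw [← Finset.sum_filter]
    have h3 : (range (Finset.univ.sup lam)).filter (fun j => j < lam i) = range (lam i) := by
      ext j
      simp only [Finset.mem_filter, Finset.mem_range]
      constructor
      · rintro ⟨_, h⟩; exact h
      · intro h
        exact ⟨lt_of_lt_of_le h (Finset.le_sup (Finset.mem_univ i)), h⟩
    rw [h3]
  rw [step1]
  push_cast
  refine Finset.sum_congr rfl fun i _ => ?_
  have h4 := Finset.sum_range_id_mul_two (lam i)
  have h4' : (∑ j ∈ range (lam i), (j:ℤ)) * 2 = ((lam i * (lam i - 1) : ℕ) : ℤ) := by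
    have := congrArg (Nat.cast : ℕ → ℤ) h4
    push_cast at this
    push_cast
    linarith
  have hc : ((lam i * (lam i - 1) : ℕ) : ℤ) = (lam i : ℤ) * ((lam i : ℤ) - 1) := by
    rcases Nat.eq_zero_or_pos (lam i) with h | h
    · simp [h]
    · push_cast [Nat.cast_sub h]
      ring
  have h5 := two_mul_C2 ((lam i : ℕ) : ℤ)
  linarith

/-- per-part shift identity -/
lemma C2_shift (l : ℕ) (i : ℕ) :
    C2 ((l : ℤ) - i) = C2 (l : ℤ) - i * l + C2 ((i : ℤ) + 1) := by
  have t1 := two_mul_C2 ((l:ℤ) - i)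
  have t2 := two_mul_C2 (l : ℤ)
  have t3 := two_mul_C2 ((i:ℤ) + 1)
  have hr : ((l:ℤ) - i) * (((l:ℤ) - i) - 1)
      = (l:ℤ)*((l:ℤ)-1) - 2*(i*l) + ((i:ℤ)+1)*(((i:ℤ)+1)-1) := by ring
  linarith

lemma sumC2 (N : ℕ) (lam : Fin N → ℕ) :
    ∑ i : Fin N, C2 ((lam i : ℤ) - (i : ℕ))
      = (nStatConj N lam : ℤ) - (nStat N lam : ℤ) + ∑ i : Fin N, C2 (((i : ℕ) : ℤ) + 1) := by
  rw [nStatConj_eq, nStat]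
  have hper : ∀ i ∈ (univ : Finset (Fin N)), C2 ((lam i : ℤ) - (i:ℕ))
      = C2 ((lam i : ℕ) : ℤ) - ((i:ℕ):ℤ) * (lam i) + C2 (((i:ℕ):ℤ) + 1) := by
    intro i _
    have := C2_shift (lam i) (i : ℕ)
    push_cast at this ⊢
    linarith
  rw [Finset.sum_congr rfl hper, Finset.sum_add_distrib, Finset.sum_sub_distrib]
  push_cast
  ring

/-- pochPartition with z = q^N as a ratio of qPochs. -/
lemma pochPartition_eq {q : ℝ} (hq0 : 0 < q) (hq1 : q < 1) (N : ℕ) (lam : Fin N → ℕ) :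
    pochPartition q (q ^ (N : ℕ)) N lam
      = ∏ i : Fin N, (qPoch q (lam i + (N - 1 - (i : ℕ))) / qPoch q (N - 1 - (i : ℕ))) := by
  have hq : q ≠ 0 := hq0.ne'
  rw [pochPartition]
  refine Finset.prod_congr rfl fun i _ => ?_
  have hi : (i : ℕ) < N := i.isLt
  have hper : ∀ j : ℕ, (1 - q ^ (N:ℕ) * q ^ ((j : ℤ) - (i : ℤ)))
      = (1 - q ^ ((N - 1 - (i:ℕ)) + j + 1)) := by
    intro j
    congr 1
    rw [← zpow_natCast q (N:ℕ), ← zpow_add₀ hq, ← zpow_natCast q ((N - 1 - (i:ℕ)) + j + 1)]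
    congr 1
    omega
  rw [Finset.prod_congr rfl fun j _ => hper j]
  have := qPoch_add q (N - 1 - (i:ℕ)) (lam i)
  rw [add_comm (lam i) (N - 1 - (i:ℕ)), this]
  field_simp [qPoch_ne hq0 hq1]

def mS (N : ℕ) (μ : Fin N → ℕ) (i : Fin N) : ℕ := μ i + (N - 1 - (i : ℕ))
def eS (N : ℕ) (μ : Fin N → ℕ) (i : Fin N) : ℤ := (i : ℤ) + 1 - μ i
def lamN (N : ℕ) (ν : Fin N → ℕ) (k : Fin N) : ℕ := ν k + (N - 1 - (k : ℕ))

lemma stepB {q : ℝ} (hq0 : 0 < q) (hq1 : q < 1) (N : ℕ) (μ : Fin N → ℕ) (x : Fin N → ℝ)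
    (ν : Fin N → ℕ) (hb : ∀ i, ν i ≤ μ i) :
    (pochPartition q (q ^ (N : ℕ)) N μ / pochPartition q (q ^ (N : ℕ)) N ν) *
        sigmaCoeff q N μ ν *
        Matrix.det (fun i j : Fin N => x j ^ (ν i + (N - 1 - (i : ℕ))))
      = ∑ σ : Equiv.Perm (Fin N),
          (∏ i, cf q (mS N μ i) (eS N μ i) (lamN N ν (σ i)))
            * Matrix.det (Matrix.of fun i j : Fin N => x j ^ (lamN N ν (σ i))) := by
  have hq : q ≠ 0 := hq0.ne'
  have hn1 : (-1 : ℝ) ≠ 0 := by norm_num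
  set R : Fin N → ℝ := fun i =>
    (-1:ℝ)^((μ i : ℤ) - i) * q^(-C2 ((μ i : ℤ) - i)) * qPoch q (mS N μ i) with hR
  set S : Fin N → ℝ := fun k =>
    ((-1:ℝ)^(-((ν k : ℤ) - k)) * q^(C2 ((ν k : ℤ) - k))) * (qPoch q (lamN N ν k))⁻¹ with hS
  set B : Matrix (Fin N) (Fin N) ℝ :=
    Matrix.of fun i k : Fin N => invQPoch q (((μ i : ℤ) - i) - ((ν k : ℤ) - k)) with hB
  -- entry factorization
  have hCmat : ∀ i k : Fin N, cf q (mS N μ i) (eS N μ i) (lamN N ν k)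
      = R i * (S k * B i k) := by
    intro i k
    have hiN : (i : ℕ) < N := i.isLt
    have hkN : (k : ℕ) < N := k.isLt
    have he : eS N μ i = 1 - ((μ i : ℤ) - i) := by rw [eS]; ring
    have hM : ((mS N μ i : ℕ) : ℤ) - (lamN N ν k : ℕ)
        = ((μ i : ℤ) - i) - ((ν k : ℤ) - k) := by
      rw [mS, lamN]; push_cast; omega
    rw [he, entry_eq hq0 hq1 _ _ _ _ hM]
    rw [hR, hS, hB]
    simp only [Matrix.of_apply]
  -- coefficient determinant equals scaled B determinant
  have hdetC : Matrix.det (Matrix.of fun i k : Fin N => cf q (mS N μ i) (eS N μ i) (lamN N ν k))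
      = (∏ i, R i) * ((∏ k, S k) * Matrix.det B) := by
    have h1 : (Matrix.of fun i k : Fin N => cf q (mS N μ i) (eS N μ i) (lamN N ν k))
        = Matrix.of fun i k => R i * ((Matrix.of fun i k : Fin N => S k * B i k) i k) := by
      ext i k
      simpa using hCmat i k
    rw [h1, Matrix.det_mul_column R, Matrix.det_mul_row S B]
  -- prefactor identity
  have hsum_le : ∑ i, ν i ≤ ∑ i, μ i := Finset.sum_le_sum fun i _ => hb i
  have hsign : (∏ i, (-1:ℝ)^((μ i : ℤ) - i)) * (∏ k, (-1:ℝ)^(-((ν k : ℤ) - k)))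
      = (-1:ℝ) ^ ((∑ i, μ i) - (∑ i, ν i)) := by
    rw [← zpow_sum₀ hn1, ← zpow_sum₀ hn1, ← zpow_add₀ hn1]
    have hE : (∑ i, ((μ i : ℤ) - i)) + (∑ k, -((ν k : ℤ) - k))
        = (((∑ i, μ i) - (∑ i, ν i) : ℕ) : ℤ) := by
      have h1 : ∑ i : Fin N, ((μ i : ℤ) - i) = ∑ i : Fin N, (μ i : ℤ) - ∑ i : Fin N, ((i:ℕ) : ℤ) :=
        Finset.sum_sub_distrib _ _
      have h2 : ∑ k : Fin N, -((ν k : ℤ) - k)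
          = ∑ k : Fin N, ((k:ℕ) : ℤ) - ∑ k : Fin N, (ν k : ℤ) := by
        simp only [neg_sub]
        exact Finset.sum_sub_distrib _ _
      rw [h1, h2, Nat.cast_sub hsum_le]
      push_cast
      ring
    rw [hE, zpow_natCast]
  have hqpow : (∏ i, q^(-C2 ((μ i : ℤ) - i))) * (∏ k, q^(C2 ((ν k : ℤ) - k)))
      = q ^ ((nStat N μ : ℤ) - nStatConj N μ - nStat N ν + nStatConj N ν) := by
    rw [← zpow_sum₀ hq, ← zpow_sum₀ hq, ← zpow_add₀ hq]
    congr 1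
    have h1 : ∑ i : Fin N, -C2 ((μ i : ℤ) - i) = -∑ i : Fin N, C2 ((μ i : ℤ) - (i:ℕ)) := by
      rw [← Finset.sum_neg_distrib]
    rw [h1, sumC2 N μ, sumC2 N ν]
    ring
  have hpoch : (∏ i, qPoch q (mS N μ i)) * (∏ k, (qPoch q (lamN N ν k))⁻¹)
      = pochPartition q (q ^ (N : ℕ)) N μ / pochPartition q (q ^ (N : ℕ)) N ν := by
    rw [pochPartition_eq hq0 hq1 N μ, pochPartition_eq hq0 hq1 N ν]
    rw [← Finset.prod_div_distrib]
    have : ∀ i ∈ (univ : Finset (Fin N)),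
        qPoch q (μ i + (N - 1 - (i:ℕ))) / qPoch q (N - 1 - (i:ℕ))
          / (qPoch q (ν i + (N - 1 - (i:ℕ))) / qPoch q (N - 1 - (i:ℕ)))
        = qPoch q (mS N μ i) * (qPoch q (lamN N ν i))⁻¹ := by
      intro i _
      rw [mS, lamN]
      field_simp [qPoch_ne hq0 hq1]
    rw [Finset.prod_congr rfl this, Finset.prod_mul_distrib]
  -- assemble scalars
  have hscal : (pochPartition q (q ^ (N : ℕ)) N μ / pochPartition q (q ^ (N : ℕ)) N ν) *
      sigmaCoeff q N μ ν
      = Matrix.det (Matrix.of fun i k : Fin N => cf q (mS N μ i) (eS N μ i) (lamN N ν k)) := by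
    rw [hdetC, sigmaCoeff]
    have hBdet : Matrix.det (fun i k : Fin N => invQPoch q ((μ i : ℤ) - ν k - (i : ℤ) + (k : ℤ)))
        = Matrix.det B := by
      rw [hB]
      congr 1
      ext i k
      simp only [Matrix.of_apply]
      congr 1
      ring
    rw [hBdet]
    have e1 : (∏ i, R i) = (∏ i, (-1:ℝ)^((μ i : ℤ) - i)) * (∏ i, q^(-C2 ((μ i : ℤ) - i)))
        * (∏ i, qPoch q (mS N μ i)) := by
      rw [hR, ← Finset.prod_mul_distrib, ← Finset.prod_mul_distrib]
    have e2 : (∏ k, S k) = (∏ k, (-1:ℝ)^(-((ν k : ℤ) - k))) * (∏ k, q^(C2 ((ν k : ℤ) - k)))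
        * (∏ k, (qPoch q (lamN N ν k))⁻¹) := by
      rw [hS, ← Finset.prod_mul_distrib, ← Finset.prod_mul_distrib]
    rw [e1, e2]
    rw [← hsign, ← hqpow, ← hpoch]
    ring
  rw [hscal]
  -- expand determinant over permutations
  set Cmat : Matrix (Fin N) (Fin N) ℝ :=
    Matrix.of fun i k : Fin N => cf q (mS N μ i) (eS N μ i) (lamN N ν k) with hCm
  have hdetT : Cmat.det = ∑ σ : Equiv.Perm (Fin N),
      (Equiv.Perm.sign σ : ℤ) * ∏ i, cf q (mS N μ i) (eS N μ i) (lamN N ν (σ i)) := by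
    rw [← Matrix.det_transpose, Matrix.det_apply']
    rfl
  rw [hdetT, Finset.sum_mul]
  refine Finset.sum_congr rfl fun σ _ => ?_
  have h := Matrix.det_permute σ (Matrix.of fun i j : Fin N => x j ^ (ν i + (N - 1 - (i : ℕ))))
  have hperm : Matrix.det (Matrix.of fun i j : Fin N => x j ^ (lamN N ν (σ i)))
      = ((Equiv.Perm.sign σ : ℤ) : ℝ)
        * Matrix.det (fun i j : Fin N => x j ^ (ν i + (N - 1 - (i : ℕ)))) := by
    calc Matrix.det (Matrix.of fun i j : Fin N => x j ^ (lamN N ν (σ i)))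
        = ((Matrix.of fun i j : Fin N =>
            x j ^ (ν i + (N - 1 - (i : ℕ)))).submatrix σ id).det := rfl
      _ = _ := h
  rw [hperm]
  ring

/-- Expansion of a determinant whose rows are linear combinations. -/
lemma det_sum_rows {N K : ℕ} (c : Fin N → ℕ → ℝ) (v : ℕ → Fin N → ℝ) :
    Matrix.det (Matrix.of fun i j : Fin N => ∑ k ∈ Finset.range K, c i k * v k j)
      = ∑ r ∈ Fintype.piFinset (fun _ : Fin N => Finset.range K),
          (∏ i, c i (r i)) * Matrix.det (Matrix.of fun i j : Fin N => v (r i) j) := by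
  classical
  have key := (Matrix.detRowAlternating (R := ℝ) (n := Fin N)).toMultilinearMap.map_sum_finset
      (fun i k => c i k • v k) (fun _ : Fin N => Finset.range K)
  have h0 : (fun i : Fin N => ∑ k ∈ Finset.range K, c i k • v k)
      = fun i j => ∑ k ∈ Finset.range K, c i k * v k j := by
    funext i j
    simp [Finset.sum_apply]
  rw [h0] at key
  calc Matrix.det (Matrix.of fun i j : Fin N => ∑ k ∈ Finset.range K, c i k * v k j)
      = ∑ r ∈ Fintype.piFinset (fun _ : Fin N => Finset.range K),
          (Matrix.detRowAlternating (R := ℝ) (n := Fin N)).toMultilinearMap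
            (fun i => c i (r i) • v (r i)) := key
    _ = _ := by
      refine Finset.sum_congr rfl fun r _ => ?_
      rw [MultilinearMap.map_smul_univ]
      rfl

/-- gap estimate for strictly antitone tuples -/
lemma sa_gap {N : ℕ} {f : Fin N → ℕ} (hf : StrictAnti f) :
    ∀ (d : ℕ) (a b : Fin N), (b : ℕ) = (a : ℕ) + d → f b + d ≤ f a := by
  intro d
  induction d with
  | zero =>
    intro a b h
    have : b = a := Fin.ext (by omega)
    subst this
    omega
  | succ d ih =>
    intro a b h
    have hb' : ((a : ℕ) + d) < N := by have := b.isLt; omega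
    set b' : Fin N := ⟨(a : ℕ) + d, hb'⟩ with hbdef
    have h1 : f b' + d ≤ f a := ih a b' rfl
    have h2 : f b < f b' := hf (by rw [Fin.lt_def]; simp [hbdef]; omega)
    omega

/-- two strictly antitone tuples related by a permutation are equal,
and the permutation is the identity. -/
lemma sa_unique {N : ℕ} {f g : Fin N → ℕ} (hf : StrictAnti f) (hg : StrictAnti g)
    (σ : Equiv.Perm (Fin N)) (h : ∀ i, f i = g (σ i)) : f = g ∧ σ = 1 := by
  have hcomp : f = g ∘ σ := funext h
  have hrange : Set.range f = Set.range g := by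
    rw [hcomp]
    exact Set.range_comp g σ ▸ (by rw [Equiv.range_eq_univ, Set.image_univ])
  have hfg : f = g := (StrictAnti.range_inj hf hg).mp hrange
  constructor
  · exact hfg
  · ext i
    have h2 : g i = g (σ i) := by rw [← congrFun hfg i]; exact h i
    have h3 : i = σ i := hg.injective h2
    simp [← h3]


lemma lamN_sa {N : ℕ} {ν : Fin N → ℕ} (hν : Antitone ν) : StrictAnti (lamN N ν) := by
  intro a b hab
  have h1 : ν b ≤ ν a := hν hab.le
  have h2 : (a : ℕ) < (b : ℕ) := hab
  have h3 : (b : ℕ) < N := b.isLt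
  rw [lamN, lamN]
  omega

end ISE

open ISE in
/-- Schur expansion of `I_{μ|N}`: stated after clearing the common Vandermonde
denominator, as an identity valid for all `x`; the sum ranges over all partitions
`ν ⊆ μ`, encoded as antitone tuples with `ν i ≤ μ i`. -/
theorem interpolation_schur_expansion (q : ℝ) (hq0 : 0 < q) (hq1 : q < 1) (N : ℕ)
    (μ : Fin N → ℕ) (hμ : Antitone μ) (x : Fin N → ℝ) :
    interpNum q N μ x
      = ∑ ν ∈ Finset.univ.filter
            (fun ν : ∀ i : Fin N, Fin (μ i + 1) => Antitone fun i => (ν i : ℕ)),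
          (pochPartition q (q ^ (N : ℕ)) N μ /
              pochPartition q (q ^ (N : ℕ)) N (fun i => (ν i : ℕ))) *
            sigmaCoeff q N μ (fun i => (ν i : ℕ)) *
            Matrix.det (fun i j : Fin N => x j ^ ((ν i : ℕ) + (N - 1 - (i : ℕ)))) := by
  classical
  have hq : q ≠ 0 := hq0.ne'
  set K : ℕ := N + Finset.univ.sup μ with hK
  set T : (Fin N → ℕ) → ℝ := fun r =>
    (∏ i, cf q (mS N μ i) (eS N μ i) (r i)) *
      Matrix.det (Matrix.of fun i j : Fin N => x j ^ (r i)) with hT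
  have hmK : ∀ i : Fin N, mS N μ i + 1 ≤ K := by
    intro i
    have h1 : μ i ≤ Finset.univ.sup μ := Finset.le_sup (Finset.mem_univ i)
    have h2 := i.isLt
    rw [mS, hK]
    omega
  -- Step A : expand the interpolation determinant
  have entry : ∀ i j : Fin N,
      (∏ t ∈ Finset.range (μ i + (N - 1 - (i : ℕ))), (x j - q ^ ((i : ℤ) + 1 - μ i + t)))
        = ∑ k ∈ Finset.range K, cf q (mS N μ i) (eS N μ i) k * x j ^ k := by
    intro i j
    have h1 := expand hq0 hq1 (mS N μ i) (eS N μ i) (x j)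
    have h2 : ∏ t ∈ Finset.range (μ i + (N - 1 - (i : ℕ))), (x j - q ^ ((i : ℤ) + 1 - μ i + t))
        = ∏ t ∈ Finset.range (mS N μ i), (x j - q ^ (eS N μ i + t)) := rfl
    rw [h2, h1]
    refine Finset.sum_subset (Finset.range_subset_range.mpr (hmK i)) ?_
    intro k hk1 hk2
    simp only [Finset.mem_range] at hk1 hk2
    rw [cf_of_gt q _ (by omega), zero_mul]
  have stepA : interpNum q N μ x
      = ∑ r ∈ Fintype.piFinset (fun _ : Fin N => Finset.range K), T r := by
    rw [interpNum]
    have hM : (fun i j : Fin N => ∏ t ∈ Finset.range (μ i + (N - 1 - (i : ℕ))),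
          (x j - q ^ ((i : ℤ) + 1 - μ i + t)))
        = Matrix.of fun i j : Fin N =>
            ∑ k ∈ Finset.range K, cf q (mS N μ i) (eS N μ i) k * x j ^ k := by
      funext i j
      exact entry i j
    rw [hM]
    exact (det_sum_rows (fun i k => cf q (mS N μ i) (eS N μ i) k) (fun k j => x j ^ k)).trans
      (Finset.sum_congr rfl fun r _ => rfl)
  -- Step B : rewrite the right-hand side as a sum over pairs
  have stepBsum : (∑ ν ∈ Finset.univ.filter
            (fun ν : ∀ i : Fin N, Fin (μ i + 1) => Antitone fun i => (ν i : ℕ)),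
          (pochPartition q (q ^ (N : ℕ)) N μ /
              pochPartition q (q ^ (N : ℕ)) N (fun i => (ν i : ℕ))) *
            sigmaCoeff q N μ (fun i => (ν i : ℕ)) *
            Matrix.det (fun i j : Fin N => x j ^ ((ν i : ℕ) + (N - 1 - (i : ℕ)))))
      = ∑ p ∈ (Finset.univ.filter
            (fun ν : ∀ i : Fin N, Fin (μ i + 1) => Antitone fun i => (ν i : ℕ))) ×ˢ
            (Finset.univ : Finset (Equiv.Perm (Fin N))),
          T (fun i => lamN N (fun t => (p.1 t : ℕ)) (p.2 i)) := by
    rw [Finset.sum_product]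
    refine Finset.sum_congr rfl fun ν hν => ?_
    have hb : ∀ i, (fun t => (ν t : ℕ)) i ≤ μ i := fun i => by
      show (ν i : ℕ) ≤ μ i
      have := (ν i).isLt
      omega
    exact (stepB hq0 hq1 N μ x (fun t => (ν t : ℕ)) hb).trans
      (Finset.sum_congr rfl fun σ _ => rfl)
  rw [stepA, stepBsum]
  -- Step C : bijection between pairs and exponent tuples
  refine (Finset.sum_bij_ne_zero
    (i := fun p _ _ => fun i => lamN N (fun t => (p.1 t : ℕ)) (p.2 i)) ?_ ?_ ?_ ?_).symm
  · -- membership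
    intro p hp hne
    rw [Fintype.mem_piFinset]
    intro i
    rw [Finset.mem_range]
    have h1 : (p.1 (p.2 i) : ℕ) < μ (p.2 i) + 1 := (p.1 (p.2 i)).isLt
    have h2 : μ (p.2 i) ≤ Finset.univ.sup μ := Finset.le_sup (Finset.mem_univ _)
    have h3 := (p.2 i).isLt
    simp only [lamN, hK]
    omega
  · -- injectivity
    intro p₁ h₁₁ h₁₂ p₂ h₂₁ h₂₂ heq
    have ha₁ : Antitone fun t => ((p₁.1 t : ℕ)) :=
      (Finset.mem_filter.mp (Finset.mem_product.mp h₁₁).1).2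
    have ha₂ : Antitone fun t => ((p₂.1 t : ℕ)) :=
      (Finset.mem_filter.mp (Finset.mem_product.mp h₂₁).1).2
    have hf := lamN_sa ha₁
    have hg := lamN_sa ha₂
    set f := lamN N (fun t => (p₁.1 t : ℕ)) with hfd
    set g := lamN N (fun t => (p₂.1 t : ℕ)) with hgd
    have hcomp : ∀ i, f (p₁.2 i) = g (p₂.2 i) := fun i => congrFun heq i
    have hstep : ∀ i, f i = g ((p₁.2.symm.trans p₂.2) i) := by
      intro i
      have := hcomp (p₁.2.symm i)
      rwa [Equiv.apply_symm_apply] at this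
    obtain ⟨hfg, hτ⟩ := sa_unique hf hg (p₁.2.symm.trans p₂.2) hstep
    have hν : p₁.1 = p₂.1 := by
      funext k
      have h1 : f k = g k := congrFun hfg k
      rw [hfd, hgd, lamN, lamN] at h1
      exact Fin.ext (by omega)
    have hσ : p₁.2 = p₂.2 := by
      ext j
      have h1 : (p₁.2.symm.trans p₂.2) (p₁.2 j) = p₁.2 j := by rw [hτ]; rfl
      have h2 : p₂.2 j = p₁.2 j := by
        simpa [Equiv.trans_apply, Equiv.symm_apply_apply] using h1
      exact congrArg Fin.val h2.symm
    exact Prod.ext hν hσ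
  · -- surjectivity
    intro r hr hTne
    have hprod : (∏ i, cf q (mS N μ i) (eS N μ i) (r i)) ≠ 0 :=
      fun h => hTne (by rw [hT]; simp [h])
    have hdet : Matrix.det (Matrix.of fun i j : Fin N => x j ^ (r i)) ≠ 0 :=
      fun h => hTne (by rw [hT]; simp [h])
    have hrinj : Function.Injective r := by
      by_contra hni
      obtain ⟨a, b, hab, hne⟩ := Function.not_injective_iff.mp hni
      exact hdet (Matrix.det_zero_of_row_eq hne (funext fun j => by simp [hab]))
    have hrb : ∀ i, r i ≤ mS N μ i := by
      intro i
      by_contra hgt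
      exact (Finset.prod_ne_zero_iff.mp hprod i (Finset.mem_univ i))
        (cf_of_gt q _ (by omega))
    set π := Tuple.sort r with hπ
    set ρ : Equiv.Perm (Fin N) := Fin.revPerm.trans π with hρ
    set L : Fin N → ℕ := fun k => r (ρ k) with hL
    have hsm : StrictMono (r ∘ π) :=
      (Tuple.monotone_sort r).strictMono_of_injective (hrinj.comp π.injective)
    have hLsa : StrictAnti L := by
      intro a b hab
      have : Fin.rev b < Fin.rev a := Fin.rev_lt_rev.mpr hab
      exact hsm this
    have hLub : ∀ i, L i ≤ mS N μ i := by
      intro i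
      by_contra hcon
      push_neg at hcon
      have hmono_m : ∀ a b : Fin N, a ≤ b → mS N μ b ≤ mS N μ a := by
        intro a b hab
        have h1 : μ b ≤ μ a := hμ hab
        have h2 : (a : ℕ) ≤ b := hab
        have h3 := b.isLt
        rw [mS, mS]
        omega
      have hsub : Finset.image ρ (Finset.Iic i) ⊆ Finset.Iio i := by
        intro j hj
        obtain ⟨k, hk, hkj⟩ := Finset.mem_image.mp hj
        have hk' : k ≤ i := Finset.mem_Iic.mp hk
        have h1 : mS N μ i < r j := by
          rw [← hkj]
          have h2 : L i ≤ L k := hLsa.antitone hk'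
          have : L k = r (ρ k) := rfl
          omega
        rw [Finset.mem_Iio]
        by_contra hge
        push_neg at hge
        have := hmono_m i j hge
        have := hrb j
        omega
      have hcard : (i : ℕ) + 1 ≤ (i : ℕ) := by
        calc (i : ℕ) + 1 = (Finset.Iic i).card := (Fin.card_Iic i).symm
          _ = (Finset.image ρ (Finset.Iic i)).card :=
              (Finset.card_image_of_injective _ ρ.injective).symm
          _ ≤ (Finset.Iio i).card := Finset.card_le_card hsub
          _ = (i : ℕ) := Fin.card_Iio i
      omega
    have hLlb : ∀ i : Fin N, N - 1 - (i : ℕ) ≤ L i := by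
      intro i
      have hN : 0 < N := i.pos
      set Ln : Fin N := ⟨N - 1, by omega⟩ with hLn
      have := sa_gap hLsa ((N - 1) - (i : ℕ)) i Ln (by simp [hLn]; omega)
      omega
    set ν : ∀ k : Fin N, Fin (μ k + 1) := fun k =>
      ⟨L k - (N - 1 - (k : ℕ)), by
        have h1 := hLub k
        have h2 := hLlb k
        rw [mS] at h1
        omega⟩ with hν
    have hlam : (fun k => lamN N (fun t => (ν t : ℕ)) k) = L := by
      funext k
      have h2 := hLlb k
      rw [lamN]
      simp only [hν]
      omega
    have hanti : Antitone fun t => ((ν t : ℕ)) := by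
      intro a b hab
      have h1 := sa_gap hLsa ((b : ℕ) - (a : ℕ)) a b (by omega)
      have h2 := b.isLt
      simp only [hν]
      omega
    refine ⟨(ν, ρ.symm), ?_, ?_, ?_⟩
    · exact Finset.mem_product.mpr
        ⟨Finset.mem_filter.mpr ⟨Finset.mem_univ _, hanti⟩, Finset.mem_univ _⟩
    · -- nonzero
      have hmap : (fun i => lamN N (fun t => ((ν t : ℕ))) (ρ.symm i)) = r := by
        funext i
        rw [congrFun hlam (ρ.symm i), hL]
        simp
      show T (fun i => lamN N (fun t => ((ν t : ℕ))) (ρ.symm i)) ≠ 0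
      rw [hmap]
      exact hTne
    · show (fun i => lamN N (fun t => ((ν t : ℕ))) (ρ.symm i)) = r
      funext i
      rw [congrFun hlam (ρ.symm i), hL]
      simp
  · -- values agree
    intro p h₁ h₂
    rfl
end

section
/- Let $0<q<1$, let $\mu$ be a partition, and let $X=(x_1,x_2,\dots)$ be a sequence of reals with $\sum_n |x_n|<\infty$. Then the series $\sum_{T\in\mathrm{Tab}(\mu)} \prod_{(i,j)\in\mu} \left(x_{T(i,j)} - q^{T(i,j)+i-j-1}\right)$ converges absolutely, where $\mathrm{Tab}(\mu)$ is the set of reverse tableaux of shape $\mu$ with entries in $\{1,2,3,\dots\}$. -/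
open Finset

/-- A reverse tableau of shape `μ` (given by an antitone tuple of `L` row lengths):
entries are positive integers, weakly decreasing along rows and strictly decreasing
down columns. -/
def IsReverseTableau (L : ℕ) (μ : Fin L → ℕ) (T : ∀ i : Fin L, Fin (μ i) → ℕ) : Prop :=
  (∀ i j, 1 ≤ T i j) ∧
  (∀ (i : Fin L) (j j' : Fin (μ i)), j ≤ j' → T i j' ≤ T i j) ∧
  (∀ (i i' : Fin L) (j : Fin (μ i)) (j' : Fin (μ i')),
      i < i' → (j : ℕ) = (j' : ℕ) → T i' j' < T i j)

set_option maxHeartbeats 1000000 in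
lemma summable_fin_pi_prod (z : ℕ → ℝ) (hz0 : ∀ k, 0 ≤ z k) (hz : Summable z) :
    ∀ n : ℕ, Summable (fun f : Fin n → ℕ => ∏ i, z (f i)) := by
  intro n
  induction n with
  | zero =>
      haveI : Finite (Fin 0 → ℕ) := Finite.of_subsingleton
      exact Summable.of_finite
  | succ n ih =>
      have h2 : Summable (fun p : ℕ × (Fin n → ℕ) => z p.1 * ∏ i, z (p.2 i)) := by
        apply Summable.mul_of_nonneg hz ih hz0
        intro f
        exact Finset.prod_nonneg fun i _ => hz0 _
      have h3 : Summable ((fun f : Fin (n + 1) → ℕ => ∏ i, z (f i)) ∘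
          (Fin.consEquiv fun _ => ℕ)) := by
        refine h2.congr fun p => ?_
        rw [Function.comp_apply,
          show ((Fin.consEquiv fun _ => ℕ) p) = Fin.cons p.1 p.2 from rfl,
          Fin.prod_univ_succ]
        simp
      exact ((Fin.consEquiv fun _ => ℕ).summable_iff).1 h3

lemma summable_pi_prod {σ : Type*} [Fintype σ] (z : ℕ → ℝ) (hz0 : ∀ k, 0 ≤ z k)
    (hz : Summable z) : Summable (fun f : σ → ℕ => ∏ p, z (f p)) := by
  obtain ⟨e⟩ : Nonempty (σ ≃ Fin (Fintype.card σ)) := ⟨Fintype.equivFin σ⟩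
  have h := summable_fin_pi_prod z hz0 hz (Fintype.card σ)
  have h3 : Summable ((fun g : Fin (Fintype.card σ) → ℕ => ∏ i, z (g i)) ∘
      (Equiv.arrowCongr e (Equiv.refl ℕ))) :=
    ((Equiv.arrowCongr e (Equiv.refl ℕ)).summable_iff).2 h
  refine h3.congr fun f => ?_
  show ∏ i, z ((Equiv.arrowCongr e (Equiv.refl ℕ)) f i) = ∏ p, z (f p)
  exact Fintype.prod_equiv e.symm _ _ (fun i => by simp)

/-- Absolute convergence of the combinatorial formula for the interpolation
symmetric function `I_μ(X;q)`: the family indexed by reverse tableaux of shape `μ`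
is summable (for real series this is absolute convergence). Here `x n` is the
`n`-th coordinate `x_n` of `X ∈ ℓ¹`, for `n ≥ 1`. -/
theorem combinatorial_series_summable (q : ℝ) (hq0 : 0 < q) (hq1 : q < 1)
    (L : ℕ) (μ : Fin L → ℕ) (hμ : Antitone μ)
    (x : ℕ → ℝ) (hx : Summable fun n => |x n|) :
    Summable (fun T : {T : ∀ i : Fin L, Fin (μ i) → ℕ // IsReverseTableau L μ T} =>
      ∏ i : Fin L, ∏ j : Fin (μ i),
        (x (T.1 i j) - q ^ ((T.1 i j : ℤ) + (i : ℤ) - (j : ℤ) - 1))) := by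
  rcases Nat.eq_zero_or_pos L with hL | hL
  · subst hL
    haveI : Subsingleton (∀ i : Fin 0, Fin (μ i) → ℕ) := ⟨fun a b => funext fun i => i.elim0⟩
    haveI : Finite {T : ∀ i : Fin 0, Fin (μ i) → ℕ // IsReverseTableau 0 μ T} :=
      Finite.of_subsingleton
    exact Summable.of_finite
  set M : ℕ := μ ⟨0, hL⟩ with hM
  set z : ℕ → ℝ := fun n => |x n| + q ^ ((n : ℤ) - M) with hzdef
  have hz0 : ∀ k, 0 ≤ z k := fun k => add_nonneg (abs_nonneg _) (zpow_nonneg hq0.le _)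
  have hz : Summable z := by
    apply hx.add
    have : (fun n : ℕ => q ^ ((n : ℤ) - M)) = fun n : ℕ => q ^ (-(M : ℤ)) * q ^ n := by
      funext n
      rw [sub_eq_add_neg, zpow_add₀ (ne_of_gt hq0), zpow_natCast]
      ring
    rw [this]
    exact (summable_geometric_of_lt_one hq0.le hq1).mul_left _
  -- summable dominating family on the full pi type
  have hdom : Summable (fun T : ∀ i : Fin L, Fin (μ i) → ℕ =>
      ∏ i : Fin L, ∏ j : Fin (μ i), z (T i j)) := by
    have h := summable_pi_prod (σ := Σ i : Fin L, Fin (μ i)) z hz0 hz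
    have h3 : Summable ((fun f : (Σ i : Fin L, Fin (μ i)) → ℕ => ∏ p, z (f p)) ∘
        ((Equiv.piCurry fun _ _ => ℕ).symm)) :=
      (((Equiv.piCurry fun (_ : Fin L) (_ : Fin (μ _)) => ℕ).symm).summable_iff).2 h
    refine h3.congr fun T => ?_
    show ∏ p : Σ i : Fin L, Fin (μ i), z (Sigma.uncurry T p) = _
    rw [← Finset.univ_sigma_univ, Finset.prod_sigma]
    rfl
  have hdom' := hdom.subtype (p := IsReverseTableau L μ)
  refine Summable.of_abs (Summable.of_nonneg_of_le (fun T => abs_nonneg _) ?_ hdom')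
  intro T
  calc |∏ i : Fin L, ∏ j : Fin (μ i),
        (x (T.1 i j) - q ^ ((T.1 i j : ℤ) + (i : ℤ) - (j : ℤ) - 1))|
      ≤ ∏ i : Fin L, ∏ j : Fin (μ i),
        |x (T.1 i j) - q ^ ((T.1 i j : ℤ) + (i : ℤ) - (j : ℤ) - 1)| := by
        refine (Finset.abs_prod _ _).le.trans ?_
        refine Finset.prod_le_prod (fun _ _ => abs_nonneg _) (fun i _ => ?_)
        exact (Finset.abs_prod _ _).le
    _ ≤ ∏ i : Fin L, ∏ j : Fin (μ i), z (T.1 i j) := by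
        refine Finset.prod_le_prod (fun _ _ => Finset.prod_nonneg fun _ _ => abs_nonneg _)
          (fun i _ => ?_)
        refine Finset.prod_le_prod (fun _ _ => abs_nonneg _) (fun j _ => ?_)
        refine (abs_sub _ _).trans ?_
        rw [abs_of_nonneg (zpow_nonneg hq0.le _)]
        refine add_le_add le_rfl ?_
        refine zpow_le_zpow_right_of_le_one₀ hq0 hq1.le ?_
        have hj : (j : ℕ) < μ i := j.isLt
        have hμi : μ i ≤ M := hμ (by exact Fin.mk_le_of_le_val (Nat.zero_le _))
        omega
end
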